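/- For any r > 0, g > 0, N₀ > 0 and any water level ν > 0, there exists a unique b > 0 satisfying the stationarity (KKT) equation (N₀/g)·( (r·ln 2 / b)·2^{r/b} − (2^{r/b} − 1) ) = ν; that is, the marginal power saving of extra bandwidth equals ν at exactly one bandwidth value. -/

import Mathlib

noncomputable section KKTAux

private def kktL : ℝ := Real.log 2

private lemma kktL_pos : 0 < kktL := Real.log_pos one_lt_two

/-- auxiliary function `h x = x·L·e^{Lx} − (e^{Lx} − 1)` -/
private def kktH (x : ℝ) : ℝ :=
  x * kktL * Real.exp (kktL * x) - (Real.exp (kktL * x) - 1)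

private lemma kktH_hasDerivAt (x : ℝ) :
    HasDerivAt kktH (x * kktL ^ 2 * Real.exp (kktL * x)) x := by
  have h1 : HasDerivAt (fun x : ℝ => kktL * x) kktL x := by
    simpa using (hasDerivAt_id x).const_mul kktL
  have h2 : HasDerivAt (fun x : ℝ => Real.exp (kktL * x)) (Real.exp (kktL * x) * kktL) x :=
    (Real.hasDerivAt_exp (kktL * x)).comp x h1
  have h3 : HasDerivAt (fun x : ℝ => x * kktL) kktL x := by
    simpa using (hasDerivAt_id x).mul_const kktL
  have h4 := (h3.mul h2).sub (h2.sub_const 1)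
  convert h4 using 1
  · rfl
  · rfl
  · rfl
  · ring

private lemma kktH_cont : Continuous kktH := by
  unfold kktH; fun_prop

private lemma kktH_strictMonoOn : StrictMonoOn kktH (Set.Ici (0 : ℝ)) := by
  apply strictMonoOn_of_deriv_pos (convex_Ici 0) kktH_cont.continuousOn
  intro x hx
  rw [interior_Ici] at hx
  rw [(kktH_hasDerivAt x).deriv]
  have hx : (0:ℝ) < x := hx
  exact mul_pos (mul_pos hx (pow_pos kktL_pos 2)) (Real.exp_pos _)

private lemma kktH_zero : kktH 0 = 0 := by simp [kktH]

private lemma kktH_tendsto : Filter.Tendsto kktH Filter.atTop Filter.atTop := by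
  have heq : kktH = fun x => Real.exp (kktL * x) * (x * kktL - 1) + 1 := by
    funext x; unfold kktH; ring
  rw [heq]
  apply Filter.Tendsto.atTop_add _ tendsto_const_nhds
  apply Filter.Tendsto.atTop_mul_atTop₀
  · exact Real.tendsto_exp_atTop.comp (Filter.tendsto_id.const_mul_atTop kktL_pos)
  · exact Filter.tendsto_atTop_add_const_right _ (-1)
      (Filter.tendsto_id.atTop_mul_const kktL_pos)

/-- existence and uniqueness of positive solution of `kktH x = c` for `c > 0` -/
private lemma kktH_surj {c : ℝ} (hc : 0 < c) : ∃ x > 0, kktH x = c := by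
  obtain ⟨X, hX⟩ := (kktH_tendsto.eventually_ge_atTop c).exists_forall_of_atTop
  have hX0 : (0:ℝ) ≤ max X 0 := le_max_right _ _
  have hcX : c ≤ kktH (max X 0) := hX _ (le_max_left _ _)
  have : c ∈ Set.Icc (kktH 0) (kktH (max X 0)) := by
    rw [kktH_zero]; exact ⟨hc.le, hcX⟩
  obtain ⟨x, hxmem, hxeq⟩ := intermediate_value_Icc hX0 kktH_cont.continuousOn this
  refine ⟨x, ?_, hxeq⟩
  rcases hxmem.1.lt_or_eq with h | h
  · exact h
  · exfalso; rw [← h, kktH_zero] at hxeq; exact hc.ne hxeq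

end KKTAux

/-- For any `r > 0`, `g > 0`, `N₀ > 0` and water level `ν > 0`, there is a
unique `b > 0` with `(N₀/g)·((r·ln 2 / b)·2^{r/b} − (2^{r/b} − 1)) = ν`. -/
theorem kkt_unique_bandwidth (r g N₀ ν : ℝ)
    (hr : 0 < r) (hg : 0 < g) (hN₀ : 0 < N₀) (hν : 0 < ν) :
    ∃! b : ℝ, 0 < b ∧
      (N₀ / g) * ((r * Real.log 2 / b) * (2 : ℝ) ^ (r / b) - ((2 : ℝ) ^ (r / b) - 1)) = ν := by
  have key : ∀ b : ℝ, b ≠ 0 →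
      (r * Real.log 2 / b) * (2 : ℝ) ^ (r / b) - ((2 : ℝ) ^ (r / b) - 1) = kktH (r / b) := by
    intro b hb
    unfold kktH kktL
    rw [Real.rpow_def_of_pos two_pos]
    ring
  set c := ν * g / N₀ with hcdef
  have hc : 0 < c := by positivity
  obtain ⟨x, hx, hxeq⟩ := kktH_surj hc
  have hNg : N₀ / g ≠ 0 := by positivity
  -- the equation is equivalent to kktH (r/b) = c
  have equiv : ∀ b : ℝ, 0 < b →
      ((N₀ / g) * ((r * Real.log 2 / b) * (2 : ℝ) ^ (r / b) - ((2 : ℝ) ^ (r / b) - 1)) = ν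
        ↔ kktH (r / b) = c) := by
    intro b hb
    rw [key b hb.ne']
    constructor
    · intro h
      rw [hcdef, ← h]; field_simp
    · intro h
      rw [h, hcdef]; field_simp
  refine ⟨r / x, ⟨by positivity, ?_⟩, ?_⟩
  · rw [equiv _ (by positivity)]
    rw [div_div_cancel₀ hr.ne']
    exact hxeq
  · rintro b ⟨hb, heq⟩
    rw [equiv b hb] at heq
    have h1 : (0:ℝ) < r / b := by positivity
    have h2 : r / b = x := by
      apply kktH_strictMonoOn.injOn h1.le (Set.mem_Ici.mpr hx.le)
      rw [heq, hxeq]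
    field_simp
    rw [div_eq_iff hb.ne'] at h2
    linarith [h2]
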